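/- Maj and Eag are incomparable under relative worst order analysis: Maj_W(E_n) ≥ (n/2 − 3 + 8/n)·Eag_W(E_n), while Eag_W(W_n) ≥ (n/4)·Maj_W(W_n), where W'_n = a_1,...,a_{⌈n/2⌉}, a_0,...,a_0 (⌊n/2⌋ copies of a_0) is a worst ordering for Eag of the content of W_n. -/

import Mathlib

open scoped BigOperators

noncomputable section

/-- frequency of item `a` in sequence `I` -/
def freq (I : List ℕ) (a : ℕ) : ℝ := (I.count a : ℝ) / (I.length : ℝ)

/-- profit (aggregate frequency) of buffer sequence `S` against input `I` -/
def profit (I S : List ℕ) : ℝ := (S.map (freq I)).sum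

/-- Naive algorithm: buffers every arriving item. -/
def naiP (I : List ℕ) : ℝ := profit I I

/-- Buffers of the eager algorithm: buffer each arriving item until the first
repeated item (two equal consecutive items), then keep it forever. -/
def eagRun : List ℕ → List ℕ
  | [] => []
  | [x] => [x]
  | x :: y :: rest =>
      if x = y then x :: List.replicate (rest.length + 1) x
      else x :: eagRun (y :: rest)

def eagP (I : List ℕ) : ℝ := profit I (eagRun I)

/-- One step of the Majority algorithm on state (buffer, counter). -/
def majStep (s : ℕ × ℕ) (a : ℕ) : ℕ × ℕ :=
  if s.2 = 0 then (a, 1)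
  else if a = s.1 then (s.1, s.2 + 1)
  else (s.1, s.2 - 1)

def majBuffers (I : List ℕ) : List ℕ :=
  ((List.scanl majStep ((0 : ℕ), (0 : ℕ)) I).tail).map Prod.fst

def majP (I : List ℕ) : ℝ := profit I (majBuffers I)

/-- A valid offline buffer schedule: at each step the buffer holds either the
currently arriving item or the previously buffered item (the first buffered
item must be the first arriving item). -/
def ValidSched (I S : List ℕ) : Prop :=
  S.length = I.length ∧
    ∀ i, i < S.length →
      S.getD i 0 = I.getD i 0 ∨ (0 < i ∧ S.getD i 0 = S.getD (i - 1) 0)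

/-- Optimal offline profit. -/
def optP (I : List ℕ) : ℝ := sSup {x | ∃ S, ValidSched I S ∧ x = profit I S}

/-- Worst-permutation value of an algorithm's profit. -/
def worstP (f : List ℕ → ℝ) (I : List ℕ) : ℝ := sInf {x | ∃ J, J.Perm I ∧ x = f J}

/-- E_n = a,a,b,b,...,b with n-2 copies of b. -/
def Eseq (n a b : ℕ) : List ℕ := a :: a :: List.replicate (n - 2) b

/-- W_n = a_1,a_0,a_2,a_0,... with item 0 playing the role of a_0. -/
def Wseq (n : ℕ) : List ℕ :=
  ((List.range (n / 2)).flatMap fun i => [i + 1, 0]) ++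
    (if n % 2 = 1 then [n / 2 + 1] else [])

/-- W'_n = a_1,...,a_⌈n/2⌉,a_0,...,a_0 with ⌊n/2⌋ copies of a_0 = 0. -/
def Wseq' (n : ℕ) : List ℕ :=
  ((List.range ((n + 1) / 2)).map (· + 1)) ++ List.replicate (n / 2) 0

/-- I_n = ⌈n/2⌉ copies of a_0 = 0 followed by ⌊n/2⌋ distinct items. -/
def Iseq (n : ℕ) : List ℕ :=
  List.replicate ((n + 1) / 2) 0 ++ (List.range (n / 2)).map (· + 1)

/-- D(I): the items of `I` listed in nondecreasing order of frequency. -/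
def Dsort (I : List ℕ) : List ℕ :=
  List.insertionSort (fun x y => I.count x ≤ I.count y) I

/-- The interleaving permutation a'_1, a'_n, a'_2, a'_{n-1}, ... of a list. -/
def interleave : List ℕ → List ℕ
  | [] => []
  | x :: xs => x :: interleave xs.reverse
termination_by l => l.length
decreasing_by set_option linter.unnecessarySimpa false in simpa using Nat.lt_succ_self xs.length

/-- max over sequences of length n of f(I) - g(I). -/
def maxDiff (f g : List ℕ → ℝ) (n : ℕ) : ℝ :=
  sSup {d | ∃ I : List ℕ, I.length = n ∧ d = f I - g I}

/-- min over sequences of length n of f(I) - g(I). -/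
def minDiff (f g : List ℕ → ℝ) (n : ℕ) : ℝ :=
  sInf {d | ∃ I : List ℕ, I.length = n ∧ d = f I - g I}

/-- A deterministic online algorithm for the single-buffer frequent items
problem: the buffer after each nonempty prefix is either the arriving item or
the previous buffer content. -/
structure OnlineAlg where
  buf : List ℕ → ℕ
  first : ∀ x, buf [x] = x
  step : ∀ l x, l ≠ [] → buf (l ++ [x]) = x ∨ buf (l ++ [x]) = buf l

/-- Profit of an online algorithm on input `I`. -/
def oprofit (A : OnlineAlg) (I : List ℕ) : ℝ :=
  ∑ t ∈ Finset.range I.length, freq I (A.buf (I.take (t + 1)))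

end



section Aux
open List

lemma freq_nonneg (I : List ℕ) (a : ℕ) : 0 ≤ freq I a := by
  unfold freq; positivity

lemma profit_nonneg (I S : List ℕ) : 0 ≤ profit I S := by
  unfold profit
  apply List.sum_nonneg
  intro x hx
  obtain ⟨v, _, rfl⟩ := List.mem_map.1 hx
  exact freq_nonneg I v

lemma eagP_nonneg (I : List ℕ) : 0 ≤ eagP I := profit_nonneg _ _
lemma majP_nonneg (I : List ℕ) : 0 ≤ majP I := profit_nonneg _ _

lemma worstP_bddBelow (f : List ℕ → ℝ) (I : List ℕ) (hf : ∀ J, 0 ≤ f J) :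
    BddBelow {x | ∃ J, J.Perm I ∧ x = f J} := by
  refine ⟨0, ?_⟩
  rintro x ⟨J, _, rfl⟩
  exact hf J

lemma worstP_le (f : List ℕ → ℝ) (I J : List ℕ) (hf : ∀ J, 0 ≤ f J)
    (h : J.Perm I) : worstP f I ≤ f J :=
  csInf_le (worstP_bddBelow f I hf) ⟨J, h, rfl⟩

lemma le_worstP (f : List ℕ → ℝ) (I : List ℕ) (c : ℝ)
    (h : ∀ J, J.Perm I → c ≤ f J) : c ≤ worstP f I := by
  refine le_csInf ⟨f I, I, List.Perm.refl I, rfl⟩ ?_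
  rintro x ⟨J, hJ, rfl⟩
  exact h J hJ

lemma sum_map_const' (l : List ℕ) (g : ℕ → ℝ) (c : ℝ) (h : ∀ x ∈ l, g x = c) :
    (l.map g).sum = l.length * c := by
  induction l with
  | nil => simp
  | cons x t ih =>
      simp only [List.map_cons, List.sum_cons, List.length_cons]
      rw [h x (by simp), ih (fun y hy => h y (by simp [hy]))]
      push_cast; ring

lemma sum_map_ite (B : List ℕ) (a : ℕ) (p q : ℝ) :
    (B.map fun v => if v = a then p else q).sum
      = (B.count a : ℝ) * p + ((B.length : ℝ) - B.count a) * q := by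
  induction B with
  | nil => simp
  | cons x t ih =>
      by_cases hx : x = a
      · subst hx
        simp only [List.map_cons, List.sum_cons, if_pos rfl, List.count_cons_self,
          List.length_cons, ih]
        push_cast; ring
      · simp only [List.map_cons, List.sum_cons, if_neg hx, List.length_cons, ih,
          List.count_cons_of_ne hx]
        push_cast; ring

end Aux

section EagLemmas
open List

lemma eagRun_length : ∀ l : List ℕ, (eagRun l).length = l.length
  | [] => rfl
  | [x] => rfl
  | x :: y :: rest => by
      rw [eagRun]
      split
      · simp
      · simp [eagRun_length (y :: rest)]

lemma mem_eagRun : ∀ (l : List ℕ) (v : ℕ), v ∈ eagRun l → v ∈ l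
  | [], v => by simp [eagRun]
  | [x], v => by simp [eagRun]
  | x :: y :: rest, v => by
      rw [eagRun]
      split
      · intro hv
        rcases List.mem_cons.1 hv with h | h
        · simp [h]
        · simp [List.eq_of_mem_replicate h]
      · intro hv
        rcases List.mem_cons.1 hv with h | h
        · simp [h]
        · have := mem_eagRun (y :: rest) v h
          simp [List.mem_cons] at this ⊢
          tauto

lemma eag_ge (g : ℕ → ℝ) : ∀ l : List ℕ,
    (∀ x z, [x, x] <:+: l → z ∈ l → g z ≤ g x) →
    (l.map g).sum ≤ ((eagRun l).map g).sum
  | [], _ => le_refl _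
  | [x], _ => le_refl _
  | x :: y :: rest, H => by
      rw [eagRun]
      split
      · rename_i hxy
        subst hxy
        simp only [List.map_cons, List.sum_cons, List.map_replicate, List.sum_replicate]
        have hinf : [x, x] <:+: x :: x :: rest := ⟨[], rest, rfl⟩
        have hb : ∀ r ∈ rest.map g, r ≤ g x := by
          rintro r hr
          obtain ⟨z, hz, rfl⟩ := List.mem_map.1 hr
          exact H x z hinf (by simp [hz])
        have := List.sum_le_card_nsmul (rest.map g) (g x) hb
        rw [List.length_map] at this
        rw [nsmul_eq_mul] at this ⊢
        push_cast at this ⊢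
        nlinarith [this]
      · rename_i hxy
        simp only [List.map_cons, List.sum_cons]
        have H' : ∀ x' z, [x', x'] <:+: y :: rest → z ∈ y :: rest → g z ≤ g x' := by
          intro x' z hi hz
          exact H x' z (List.infix_cons hi) (by simp [hz])
        have := eag_ge g (y :: rest) H'
        simp only [List.map_cons, List.sum_cons] at this
        linarith

end EagLemmas

section EagFix
open List

lemma eagRun_replicate (k : ℕ) (x : ℕ) : eagRun (List.replicate k x) = List.replicate k x := by
  match k with
  | 0 => rfl
  | 1 => rfl
  | (k+2) =>
      show eagRun (x :: x :: List.replicate k x) = _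
      rw [eagRun, if_pos rfl, List.length_replicate]
      simp [List.replicate_succ]

lemma eagRun_chain (k : ℕ) (hk : 2 ≤ k) :
    ∀ (m s : ℕ), 1 ≤ s →
      eagRun (List.range' s m ++ List.replicate k 0) = List.range' s m ++ List.replicate k 0
  | 0, s, hs => by simpa using eagRun_replicate k 0
  | 1, s, hs => by
      obtain ⟨k', rfl⟩ : ∃ k', k = k' + 2 := ⟨k - 2, by omega⟩
      show eagRun (s :: (0 :: 0 :: List.replicate k' 0)) = _
      rw [eagRun, if_neg (by omega)]
      congr 1
      exact eagRun_replicate (k' + 2) 0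
  | (m+2), s, hs => by
      rw [List.range'_succ]
      show eagRun (s :: (List.range' (s+1) (m+1) ++ List.replicate k 0)) = _
      rw [List.range'_succ]
      show eagRun (s :: ((s+1) :: (List.range' (s+2) m ++ List.replicate k 0))) = _
      rw [eagRun, if_neg (by omega)]
      have := eagRun_chain k hk (m+1) (s+1) (by omega)
      rw [List.range'_succ] at this
      simp only [List.cons_append] at this ⊢
      rw [this]

end EagFix

section MajLemmas
open List

lemma scanl_eq_cons_tail {α β : Type} (f : β → α → β) (b : β) (l : List α) :
    List.scanl f b l = b :: (List.scanl f b l).tail := by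
  cases l <;> simp [List.scanl]

/-- counter invariant: number of a-buffers is bounded. -/
lemma maj_count_le (a : ℕ) : ∀ (l : List ℕ) (s : ℕ × ℕ),
    (((List.scanl majStep s l).tail).map Prod.fst).count a
      ≤ 2 * l.count a + (if s.1 = a then s.2 else 0)
  | [], s => by simp
  | x :: l, s => by
      have h1 : (List.scanl majStep s (x :: l)).tail = List.scanl majStep (majStep s x) l := by
        rw [List.scanl_cons]; rfl
      rw [h1, scanl_eq_cons_tail]
      have ih := maj_count_le a l (majStep s x)
      rw [List.map_cons]
      rw [List.count_cons]
      rw [List.count_cons]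
      unfold majStep at *
      rcases s with ⟨bf, c⟩
      by_cases hc : c = 0 <;> by_cases hx : x = bf <;> by_cases hb : bf = a <;>
        by_cases hxa : x = a <;>
        simp_all <;> omega

/-- every buffer value comes from the input (or is a persisting initial buffer). -/
lemma maj_mem (l : List ℕ) : ∀ (s : ℕ × ℕ) (v : ℕ),
    v ∈ ((List.scanl majStep s l).tail).map Prod.fst → v ∈ l ∨ (v = s.1 ∧ 0 < s.2) := by
  induction l with
  | nil => simp
  | cons x l ih =>
      intro s v hv
      have h1 : (List.scanl majStep s (x :: l)).tail = List.scanl majStep (majStep s x) l := by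
        rw [List.scanl_cons]; rfl
      rw [h1, scanl_eq_cons_tail, List.map_cons] at hv
      rcases List.mem_cons.1 hv with h | h
      · subst h
        unfold majStep
        split_ifs with h1 h2
        · exact Or.inl (by simp)
        · by_cases hxs : s.1 = x
          · exact Or.inl (by simp [hxs])
          · exact Or.inr ⟨rfl, by omega⟩
        · exact Or.inr ⟨rfl, by omega⟩
      · rcases ih (majStep s x) v h with h' | ⟨h1', h2'⟩
        · exact Or.inl (by simp [h'])
        · unfold majStep at h1' h2'
          split_ifs at h1' h2'
          · exact Or.inl (by simp [h1'])
          · exact Or.inr ⟨h1', by omega⟩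
          · rcases Nat.eq_zero_or_pos s.2 with h | h
            · omega
            · exact Or.inr ⟨h1', h⟩

lemma majBuffers_length (I : List ℕ) : (majBuffers I).length = I.length := by
  unfold majBuffers
  rw [List.length_map, List.length_tail, List.length_scanl]
  simp

end MajLemmas

section WseqLemmas
open List

lemma Wseq'_eq (n : ℕ) :
    Wseq' n = List.range' 1 ((n + 1) / 2) ++ List.replicate (n / 2) 0 := by
  unfold Wseq'
  congr 1
  rw [List.range'_eq_map_range]
  exact (List.map_congr_left fun x _ => by omega).symm

lemma Wseq'_length (n : ℕ) : (Wseq' n).length = n := by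
  rw [Wseq'_eq, List.length_append, List.length_range', List.length_replicate]
  omega

lemma count_zero_Wseq' (n : ℕ) : (Wseq' n).count 0 = n / 2 := by
  rw [Wseq'_eq, List.count_append, List.count_replicate]
  have h0 : (0 : ℕ) ∉ List.range' 1 ((n + 1) / 2) := by
    intro h
    rw [List.mem_range'] at h
    omega
  simp [List.count_eq_zero_of_not_mem h0]

lemma count_ne_zero_Wseq' (n v : ℕ) (hv : v ≠ 0) (hmem : v ∈ Wseq' n) :
    (Wseq' n).count v = 1 := by
  rw [Wseq'_eq] at hmem ⊢
  rw [List.count_append, List.count_replicate]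
  rcases List.mem_append.1 hmem with h | h
  · rw [List.count_eq_one_of_mem List.nodup_range' h]
    simp [Ne.symm hv]
  · exact absurd (List.eq_of_mem_replicate h) hv

lemma count_le_Wseq' (n v : ℕ) (hn : 4 ≤ n) : (Wseq' n).count v ≤ n / 2 := by
  by_cases hv : v = 0
  · rw [hv, count_zero_Wseq' n]
  · by_cases hmem : v ∈ Wseq' n
    · rw [count_ne_zero_Wseq' n v hv hmem]; omega
    · rw [List.count_eq_zero_of_not_mem hmem]; omega

/-- the interleaved pairs list is a permutation of items ++ zeros -/
lemma perm_pairs : ∀ k : ℕ,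
    ((List.range k).flatMap fun i => [i + 1, 0]).Perm
      ((List.range k).map (· + 1) ++ List.replicate k 0)
  | 0 => by simp
  | (k+1) => by
      rw [List.perm_iff_count]
      intro x
      have ih := List.Perm.count_eq (perm_pairs k) x
      rw [List.range_succ, List.flatMap_append, List.map_append, List.count_append,
        List.count_append, ih, List.count_append]
      simp [List.count_replicate, List.replicate_succ, List.count_cons]
      split_ifs <;> omega

lemma Wseq'_perm_Wseq (n : ℕ) : (Wseq' n).Perm (Wseq n) := by
  rw [List.perm_iff_count]
  intro x
  have ih := List.Perm.count_eq (perm_pairs (n / 2)) x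
  unfold Wseq Wseq'
  rw [List.count_append, List.count_append, ih, List.count_append]
  rcases Nat.mod_two_eq_zero_or_one n with h | h
  · rw [show (n + 1) / 2 = n / 2 from by omega, if_neg (by omega)]
    simp
  · rw [show (n + 1) / 2 = n / 2 + 1 from by omega, if_pos h, List.range_succ,
      List.map_append, List.count_append]
    simp only [List.map_cons, List.map_nil]
    omega

end WseqLemmas

section MajWseq
open List

lemma maj_nonzero : ∀ (c s0 : ℕ) (T : List ℕ)
    (hT : ∀ st : ℕ × ℕ, st.2 = 0 →
      ∀ v ∈ ((List.scanl majStep st T).tail).map Prod.fst, v ≠ 0)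
    (st : ℕ × ℕ), st.2 = 0 →
    ∀ v ∈ ((List.scanl majStep st
        (((List.range' s0 c).flatMap fun i => [i + 1, 0]) ++ T)).tail).map Prod.fst, v ≠ 0
  | 0, s0, T, hT, st, hst => by
      intro v hv
      exact hT st hst v (by simpa using hv)
  | (c+1), s0, T, hT, st, hst => by
      intro v hv
      rw [List.range'_succ, List.flatMap_cons] at hv
      simp only [List.cons_append, List.append_assoc] at hv
      rw [List.scanl_cons] at hv
      have e1 : majStep st (s0 + 1) = (s0 + 1, 1) := by
        unfold majStep; rw [if_pos hst]
      simp only [List.singleton_append, List.tail_cons, e1] at hv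
      rw [scanl_eq_cons_tail, List.map_cons] at hv
      rcases List.mem_cons.1 hv with h | h
      · omega
      · rw [List.scanl_cons] at h
        have e2 : majStep (s0 + 1, 1) 0 = (s0 + 1, 0) := by
          unfold majStep; norm_num
        simp only [List.singleton_append, List.tail_cons, e2] at h
        rw [scanl_eq_cons_tail, List.map_cons] at h
        rcases List.mem_cons.1 h with h' | h'
        · omega
        · exact maj_nonzero c (s0 + 1) T hT (s0 + 1, 0) rfl v h'

lemma Wseq_length (n : ℕ) : (Wseq n).length = n :=
  ((Wseq'_perm_Wseq n).length_eq).symm.trans (Wseq'_length n) |>.symm ▸ rfl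

end MajWseq

section WseqValues
open List

lemma freq_eq_of_perm {I J : List ℕ} (h : J.Perm I) : freq J = freq I := by
  funext v
  unfold freq
  rw [h.count_eq, h.length_eq]

lemma mem_Wseq'_of_mem {n v : ℕ} (hv : v ∈ Wseq n) : v ∈ Wseq' n :=
  (Wseq'_perm_Wseq n).mem_iff.2 hv

lemma majP_Wseq (n : ℕ) (hn : 4 ≤ n) : majP (Wseq n) = 1 := by
  have hnR : (0 : ℝ) < n := by positivity
  have hmem : ∀ v ∈ majBuffers (Wseq n), freq (Wseq n) v = 1 / n := by
    intro v hv
    have hv0 : v ≠ 0 := by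
      unfold majBuffers at hv
      unfold Wseq at hv
      rw [List.range_eq_range'] at hv
      refine maj_nonzero (n / 2) 0 _ ?_ ((0 : ℕ), (0 : ℕ)) rfl v hv
      intro st hst u hu
      split at hu
      · rw [List.scanl_cons] at hu
        have e1 : majStep st (n / 2 + 1) = (n / 2 + 1, 1) := by
          unfold majStep; rw [if_pos hst]
        simp only [List.singleton_append, List.tail_cons, e1] at hu
        simp only [List.scanl] at hu
        simp at hu
        omega
      · simp at hu
    have hvmem : v ∈ Wseq n := by
      rcases maj_mem (Wseq n) ((0 : ℕ), (0 : ℕ)) v hv with h | ⟨_, h2⟩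
      · exact h
      · simp at h2
    have hc : (Wseq n).count v = 1 := by
      rw [← (Wseq'_perm_Wseq n).count_eq]
      exact count_ne_zero_Wseq' n v hv0 (mem_Wseq'_of_mem hvmem)
    unfold freq
    rw [hc, Wseq_length]
    norm_num
  unfold majP profit
  rw [sum_map_const' _ _ (1 / n) hmem, majBuffers_length, Wseq_length]
  field_simp

lemma eagRun_Wseq' (n : ℕ) (hn : 4 ≤ n) : eagRun (Wseq' n) = Wseq' n := by
  rw [Wseq'_eq]
  exact eagRun_chain (n / 2) (by omega) ((n + 1) / 2) 1 le_rfl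

lemma naiP_Wseq' (n : ℕ) (hn : 4 ≤ n) :
    naiP (Wseq' n) = ((n + 1) / 2 : ℕ) / (n : ℝ) + ((n / 2 : ℕ) : ℝ) * ((n / 2 : ℕ) : ℝ) / n := by
  have hnR : (0 : ℝ) < n := by positivity
  unfold naiP profit
  nth_rewrite 2 [Wseq'_eq n]
  rw [List.map_append, List.sum_append]
  rw [sum_map_const' _ _ (1 / n) ?h1, sum_map_const' _ _ (((n / 2 : ℕ) : ℝ) / n) ?h2]
  case h1 =>
    intro v hv
    have hv0 : v ≠ 0 := by
      rw [List.mem_range'] at hv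
      omega
    have hvmem : v ∈ Wseq' n := by rw [Wseq'_eq]; exact List.mem_append_left _ hv
    unfold freq
    rw [count_ne_zero_Wseq' n v hv0 hvmem, Wseq'_length]
    norm_num
  case h2 =>
    intro v hv
    have : v = 0 := List.eq_of_mem_replicate hv
    subst this
    unfold freq
    rw [count_zero_Wseq', Wseq'_length]
  rw [List.length_range', List.length_replicate]
  field_simp

lemma eagP_Wseq' (n : ℕ) (hn : 4 ≤ n) : eagP (Wseq' n) = naiP (Wseq' n) := by
  unfold eagP naiP
  rw [eagRun_Wseq' n hn]

lemma naiP_perm {I J : List ℕ} (h : J.Perm I) : naiP J = naiP I := by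
  unfold naiP profit
  rw [freq_eq_of_perm h, (h.map (freq I)).sum_eq]

lemma eagP_ge_naiP_of_perm_Wseq (n : ℕ) (hn : 4 ≤ n) (J : List ℕ) (hJ : J.Perm (Wseq n)) :
    naiP J ≤ eagP J := by
  have hJ' : J.Perm (Wseq' n) := hJ.trans (Wseq'_perm_Wseq n).symm
  unfold eagP naiP profit
  apply eag_ge
  intro x z hinf hz
  have hcx : 2 ≤ J.count x := by
    have := (hinf.sublist).count_le x
    simpa using this
  have hx0 : x = 0 := by
    by_contra hx0
    have hxJ : x ∈ J := hinf.sublist.mem (by simp)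
    have := count_ne_zero_Wseq' n x hx0 (hJ'.mem_iff.1 hxJ)
    rw [hJ'.count_eq] at hcx
    omega
  subst hx0
  have hz' : J.count z ≤ J.count 0 := by
    rw [hJ'.count_eq, hJ'.count_eq, count_zero_Wseq']
    exact count_le_Wseq' n z hn
  unfold freq
  have hlen : (0 : ℝ) < J.length := by
    rw [hJ.length_eq, Wseq_length]
    positivity
  rw [div_le_div_iff_of_pos_right hlen]
  exact_mod_cast hz'

end WseqValues

section EseqLemmas
open List

lemma Eseq_length (n a b : ℕ) (hn : 2 ≤ n) : (Eseq n a b).length = n := by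
  unfold Eseq
  simp
  omega

lemma count_a_Eseq (n a b : ℕ) (hab : a ≠ b) : (Eseq n a b).count a = 2 := by
  unfold Eseq
  rw [List.count_cons_self, List.count_cons_self, List.count_replicate]
  simp [Ne.symm hab, hab]

lemma count_b_Eseq (n a b : ℕ) (hab : a ≠ b) : (Eseq n a b).count b = n - 2 := by
  unfold Eseq
  rw [List.count_cons_of_ne hab, List.count_cons_of_ne hab,
    List.count_replicate]
  simp

lemma mem_Eseq (n a b v : ℕ) (hv : v ∈ Eseq n a b) : v = a ∨ v = b := by
  unfold Eseq at hv
  rcases List.mem_cons.1 hv with h | hv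
  · exact Or.inl h
  rcases List.mem_cons.1 hv with h | hv
  · exact Or.inl h
  · exact Or.inr (List.eq_of_mem_replicate hv)

lemma eagP_Eseq (n a b : ℕ) (hab : a ≠ b) (hn : 4 ≤ n) : eagP (Eseq n a b) = 2 := by
  have hnR : (0 : ℝ) < n := by positivity
  have hrun : eagRun (Eseq n a b) = List.replicate n a := by
    unfold Eseq
    rw [eagRun, if_pos rfl, List.length_replicate, ← List.replicate_succ,
      show n - 2 + 1 + 1 = n from by omega]
  unfold eagP profit
  rw [hrun, sum_map_const' _ _ (2 / n) ?ha, List.length_replicate]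
  · field_simp
  case ha =>
    intro v hv
    have hva : v = a := List.eq_of_mem_replicate hv
    unfold freq
    rw [hva, count_a_Eseq n a b hab, Eseq_length n a b (by omega)]
    norm_num

lemma eagP_ge_two (n a b : ℕ) (hab : a ≠ b) (hn : 4 ≤ n) (J : List ℕ)
    (hJ : J.Perm (Eseq n a b)) : 2 ≤ eagP J := by
  have hnR : (0 : ℝ) < n := by positivity
  have hlen : J.length = n := hJ.length_eq.trans (Eseq_length n a b (by omega))
  have hb : ∀ r ∈ (eagRun J).map (freq J), 2 / (n : ℝ) ≤ r := by
    intro r hr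
    obtain ⟨v, hv, rfl⟩ := List.mem_map.1 hr
    have hvJ : v ∈ J := mem_eagRun J v hv
    have hc : 2 ≤ J.count v := by
      rcases mem_Eseq n a b v (hJ.mem_iff.1 hvJ) with h | h
      · rw [h, hJ.count_eq, count_a_Eseq n a b hab]
      · rw [h, hJ.count_eq, count_b_Eseq n a b hab]; omega
    unfold freq
    rw [hlen, div_le_div_iff_of_pos_right hnR]
    exact_mod_cast hc
  have hlen2 : ((eagRun J).map (freq J)).length = n := by
    rw [List.length_map, eagRun_length, hlen]
  have h := List.card_nsmul_le_sum ((eagRun J).map (freq J)) (2 / (n : ℝ)) hb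
  rw [hlen2, nsmul_eq_mul] at h
  unfold eagP profit
  calc (2 : ℝ) = (n : ℝ) * (2 / n) := by field_simp
    _ ≤ _ := h

lemma majP_ge_Eseq (n a b : ℕ) (hab : a ≠ b) (hn : 4 ≤ n) (J : List ℕ)
    (hJ : J.Perm (Eseq n a b)) : (n : ℝ) - 6 + 16 / n ≤ majP J := by
  have hnR : (0 : ℝ) < n := by positivity
  have hlen : J.length = n := hJ.length_eq.trans (Eseq_length n a b (by omega))
  set B := majBuffers J with hB
  have hBlen : B.length = n := by rw [hB, majBuffers_length, hlen]
  have hcount : B.count a ≤ 4 := by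
    have h := maj_count_le a J ((0 : ℕ), (0 : ℕ))
    have hcJ : J.count a = 2 := by rw [hJ.count_eq, count_a_Eseq n a b hab]
    simp only [hcJ] at h
    unfold majBuffers at hB
    rw [hB]
    split_ifs at h <;> omega
  have hg : ∀ v ∈ B, freq J v = if v = a then 2 / (n : ℝ) else ((n : ℝ) - 2) / n := by
    intro v hv
    have hvJ : v ∈ J := by
      rcases maj_mem J ((0 : ℕ), (0 : ℕ)) v hv with h | ⟨_, h2⟩
      · exact h
      · simp at h2
    rcases mem_Eseq n a b v (hJ.mem_iff.1 hvJ) with h | h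
    · rw [h, if_pos rfl]
      unfold freq
      rw [hJ.count_eq, count_a_Eseq n a b hab, hlen]
      norm_num
    · rw [h, if_neg (Ne.symm hab)]
      unfold freq
      rw [hJ.count_eq, count_b_Eseq n a b hab, hlen]
      have : ((n - 2 : ℕ) : ℝ) = (n : ℝ) - 2 := by
        push_cast [Nat.cast_sub (by omega : 2 ≤ n)]
        ring
      rw [this]
  unfold majP profit
  rw [← hB, List.map_congr_left hg, _root_.sum_map_ite, hBlen]
  have hc4 : ((B.count a : ℕ) : ℝ) ≤ 4 := by exact_mod_cast hcount
  have hc0 : (0 : ℝ) ≤ ((B.count a : ℕ) : ℝ) := by positivity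
  have hn4 : (4 : ℝ) ≤ n := by exact_mod_cast hn
  set c := ((B.count a : ℕ) : ℝ) with hcdef
  have expand : (c * (2 / n) + ((n : ℝ) - c) * (((n : ℝ) - 2) / n))
      - ((n : ℝ) - 6 + 16 / n) = (4 - c) * ((n : ℝ) - 4) / n := by
    field_simp
    ring
  have hpos : 0 ≤ (4 - c) * ((n : ℝ) - 4) / n :=
    div_nonneg (mul_nonneg (by linarith) (by linarith)) (le_of_lt hnR)
  linarith

end EseqLemmas

/-- Maj and Eag are incomparable under relative worst order
analysis: Maj_W(E_n) ≥ (n/2 − 3 + 8/n)·Eag_W(E_n), while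
Eag_W(W_n) ≥ (n/4)·Maj_W(W_n), where W'_n (⌈n/2⌉ distinct items followed by
⌊n/2⌋ copies of a_0) is a worst ordering of the content of W_n for Eag. -/
theorem stmt19 (n a b : ℕ) (hab : a ≠ b) (hn : 4 ≤ n) :
    ((n : ℝ) / 2 - 3 + 8 / n) * worstP eagP (Eseq n a b) ≤ worstP majP (Eseq n a b) ∧
    (Wseq' n).Perm (Wseq n) ∧
    eagP (Wseq' n) = worstP eagP (Wseq n) ∧
    ((n : ℝ) / 4) * worstP majP (Wseq n) ≤ worstP eagP (Wseq n) := by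
  have hnR : (0 : ℝ) < n := by positivity
  have hperm := Wseq'_perm_Wseq n
  have hworsteag : eagP (Wseq' n) = worstP eagP (Wseq n) := by
    apply le_antisymm
    · apply le_worstP
      intro J hJ
      have hJ' : J.Perm (Wseq' n) := hJ.trans hperm.symm
      calc eagP (Wseq' n) = naiP (Wseq' n) := eagP_Wseq' n hn
        _ = naiP J := (naiP_perm hJ').symm
        _ ≤ eagP J := eagP_ge_naiP_of_perm_Wseq n hn J hJ
    · exact worstP_le eagP _ _ eagP_nonneg hperm
  refine ⟨?_, hperm, hworsteag, ?_⟩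
  · -- Eseq part
    have hE2 : worstP eagP (Eseq n a b) ≤ 2 := by
      have := worstP_le eagP (Eseq n a b) (Eseq n a b) eagP_nonneg (List.Perm.refl _)
      rwa [eagP_Eseq n a b hab hn] at this
    have hElow : (0 : ℝ) ≤ worstP eagP (Eseq n a b) :=
      le_worstP eagP _ 0 (fun J _ => eagP_nonneg J)
    have hMlow : (n : ℝ) - 6 + 16 / n ≤ worstP majP (Eseq n a b) :=
      le_worstP majP _ _ (majP_ge_Eseq n a b hab hn)
    have hc : (0 : ℝ) ≤ (n : ℝ) / 2 - 3 + 8 / n := by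
      have key : (n : ℝ) / 2 - 3 + 8 / n = ((( (n:ℝ) - 3) ^ 2) + 7) / (2 * n) + 0 := by
        field_simp
        ring
      rw [key]
      positivity
    calc ((n : ℝ) / 2 - 3 + 8 / n) * worstP eagP (Eseq n a b)
        ≤ ((n : ℝ) / 2 - 3 + 8 / n) * 2 := by
          exact mul_le_mul_of_nonneg_left hE2 hc
      _ = (n : ℝ) - 6 + 16 / n := by ring
      _ ≤ worstP majP (Eseq n a b) := hMlow
  · -- Wseq part
    have hM1 : worstP majP (Wseq n) ≤ 1 := by
      have := worstP_le majP (Wseq n) (Wseq n) majP_nonneg (List.Perm.refl _)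
      rwa [majP_Wseq n hn] at this
    have hn4 : (4 : ℝ) ≤ (n : ℝ) := by exact_mod_cast hn
    have hq : (n : ℝ) / 4 ≤ worstP eagP (Wseq n) := by
      rw [← hworsteag, eagP_Wseq' n hn, naiP_Wseq' n hn]
      set K := ((n / 2 : ℕ) : ℝ) with hK
      set M := (((n + 1) / 2 : ℕ) : ℝ) with hM
      have e1 : M + K = (n : ℝ) := by
        rw [hK, hM]
        exact_mod_cast (by omega : (n + 1) / 2 + n / 2 = n)
      have e2 : (n : ℝ) ≤ 2 * K + 1 := by
        rw [hK]
        exact_mod_cast (by omega : n ≤ 2 * (n / 2) + 1)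
      rw [← add_div, div_le_div_iff₀ (by positivity) hnR]
      nlinarith [sq_nonneg (2 * K - ((n : ℝ) - 1)), mul_nonneg (by linarith : (0:ℝ) ≤ 2 * K - ((n : ℝ) - 1)) (by linarith : (0:ℝ) ≤ (n : ℝ) - 2)]
    calc ((n : ℝ) / 4) * worstP majP (Wseq n)
        ≤ ((n : ℝ) / 4) * 1 := mul_le_mul_of_nonneg_left hM1 (by positivity)
      _ = (n : ℝ) / 4 := by ring
      _ ≤ worstP eagP (Wseq n) := hq
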